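/- (Negative real-axis bound for the second-order TASE modified eigenvalue.) For every real α > 0 and every real x ≤ 0, the quantity w(x) = x * (-(1 - α*x)⁻¹ + 4*(2 - α*x)⁻¹) satisfies -3/α < w(x) ≤ 0. Consequently, if C > 0 and α ≥ 3/C, then -C ≤ w(x) ≤ 0, so the modified dimensionless eigenvalue lies within the real stability interval [-C, 0] of the explicit scheme for every time step. -/

import Mathlib

/-- Negative real-axis bound for the second-order TASE modified eigenvalue:
for `α > 0` and `x ≤ 0`, `w(x) = x(-(1-αx)⁻¹ + 4(2-αx)⁻¹)` satisfies
`-3/α < w(x) ≤ 0`; hence if `C > 0` and `α ≥ 3/C`, then `w(x) ∈ [-C, 0]`. -/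
theorem tase2_real_axis_bound (α : ℝ) (hα : 0 < α) (x : ℝ) (hx : x ≤ 0) :
    (-3 / α < x * (-(1 - α * x)⁻¹ + 4 * (2 - α * x)⁻¹) ∧
        x * (-(1 - α * x)⁻¹ + 4 * (2 - α * x)⁻¹) ≤ 0) ∧
      ∀ C : ℝ, 0 < C → 3 / C ≤ α →
        -C ≤ x * (-(1 - α * x)⁻¹ + 4 * (2 - α * x)⁻¹) ∧
          x * (-(1 - α * x)⁻¹ + 4 * (2 - α * x)⁻¹) ≤ 0 := by
  have h1 : (0:ℝ) < 1 - α * x := by nlinarith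
  have h2 : (0:ℝ) < 2 - α * x := by nlinarith
  have hexp : x * (-(1 - α * x)⁻¹ + 4 * (2 - α * x)⁻¹)
      = x * (2 - 3 * (α * x)) / ((1 - α * x) * (2 - α * x)) := by
    field_simp
    have ha : 1 - x * α ≠ 0 := by nlinarith
    have hb : 2 - x * α ≠ 0 := by nlinarith
    field_simp
    ring
  have hle : x * (-(1 - α * x)⁻¹ + 4 * (2 - α * x)⁻¹) ≤ 0 := by
    rw [hexp]
    apply div_nonpos_of_nonpos_of_nonneg
    · nlinarith [mul_nonneg (neg_nonneg.2 hx) (by nlinarith : (0:ℝ) ≤ 2 - 3*(α*x))]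
    · positivity
  have hlt : -3 / α < x * (-(1 - α * x)⁻¹ + 4 * (2 - α * x)⁻¹) := by
    rw [hexp, div_lt_div_iff₀ hα (by positivity)]
    nlinarith [mul_nonneg (mul_nonneg hα.le (neg_nonneg.2 hx)) (mul_pos h1 h2).le,
      mul_pos hα (mul_pos h1 h2)]
  refine ⟨⟨hlt, hle⟩, fun C hC hCα => ⟨?_, hle⟩⟩
  have h3 : 3 / α ≤ C := by
    rw [div_le_iff₀ hα]
    rw [div_le_iff₀ hC] at hCα
    linarith
  have : -C ≤ -3 / α := by
    rw [neg_div]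
    linarith
  linarith
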